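/- Let ψ : R → S be a continuous homomorphism of topological rings, M a finitely generated R-module equipped with the quotient topology from some surjection R^ℓ ↠ M, and N a finitely generated S-module equipped with the quotient topology from some surjection S^m ↠ N. Then every ψ-semilinear map α : M → N (i.e. α additive with α(rm) = ψ(r)α(m)) is continuous. -/

import Mathlib

/-- Let `ψ : R → S` be a continuous homomorphism of topological rings, `M` a
finitely generated `R`-module carrying the quotient topology from some surjection
`R^ℓ ↠ M`, and `N` a finitely generated `S`-module carrying the quotient topology
from some surjection `S^m ↠ N`.  Then every `ψ`-semilinear map `α : M → N` is
continuous. -/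
theorem semilinear_continuous
    (R : Type*) [CommRing R] [TopologicalSpace R] [IsTopologicalRing R]
    (S : Type*) [CommRing S] [TopologicalSpace S] [IsTopologicalRing S]
    (ψ : R →+* S) (hψ : Continuous ψ)
    (M : Type*) [AddCommGroup M] [Module R M] [tM : TopologicalSpace M]
    (N : Type*) [AddCommGroup N] [Module S N] [tN : TopologicalSpace N]
    (hM : ∃ (ℓ : ℕ) (q : (Fin ℓ → R) →ₗ[R] M),
      Function.Surjective q ∧ tM = TopologicalSpace.coinduced q inferInstance)
    (hN : ∃ (m : ℕ) (q : (Fin m → S) →ₗ[S] N),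
      Function.Surjective q ∧ tN = TopologicalSpace.coinduced q inferInstance)
    (α : M → N)
    (hadd : ∀ x y : M, α (x + y) = α x + α y)
    (hsmul : ∀ (r : R) (m : M), α (r • m) = ψ r • α m) :
    Continuous α := by
  obtain ⟨ℓ, q, hq, htM⟩ := hM
  obtain ⟨m, qN, hqN, htN⟩ := hN
  set A : M →+ N := AddMonoidHom.mk' α hadd with hA
  choose v hv using fun i : Fin ℓ => hqN (α (q (fun j => if i = j then 1 else 0)))
  set F : (Fin ℓ → R) → (Fin m → S) := fun x => ∑ i, ψ (x i) • v i with hF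
  have hFc : Continuous F :=
    continuous_finset_sum _ fun i _ =>
      ((hψ.comp (continuous_apply i)).smul continuous_const)
  have hqNc : Continuous qN := by rw [htN]; exact continuous_coinduced_rng
  rw [htM, continuous_coinduced_dom]
  have key : α ∘ q = qN ∘ F := by
    funext x
    have h1 : q x = ∑ i, x i • q (fun j => if i = j then 1 else 0) :=
      LinearMap.pi_apply_eq_sum_univ q x
    simp only [Function.comp_apply, h1, hF]
    calc A (∑ i, x i • q fun j => if i = j then 1 else 0)
        = ∑ i, A (x i • q fun j => if i = j then 1 else 0) := map_sum A _ _
      _ = ∑ i, ψ (x i) • qN (v i) := by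
          refine Finset.sum_congr rfl fun i _ => ?_
          show α _ = _
          rw [hsmul, hv]
      _ = qN (∑ i, ψ (x i) • v i) := by rw [map_sum]; simp [map_smul]
  rw [key]
  exact hqNc.comp hFc
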